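/- Sorted-prefix stability under lowering one bid's density: let B be a family of bids with bid at index j equal to (d1, v1), and let B' be obtained from B by replacing only bid j with (d2, v2) where e(d2, v2) ≤ e(d1, v1). Then every index i ≠ j that precedes j in the density-sorted order of B also precedes j in the density-sorted order of B', the relative order of the indices other than j is the same in both sorted lists, and every index i ≠ j preceding j in the sorted order of B receives the same grant decision under GRP-A applied to B as under GRP-A applied to B'. -/

import Mathlib

open Classical Finset

noncomputable section

/-- A bundle: requested amounts of each of the `k` VM types. -/
abbrev Bundle (k : ℕ) := Fin k → ℕ

/-- A bid: a bundle together with a declared valuation. -/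
abbrev Bid (k : ℕ) := Bundle k × ℝ

/-- A bundle is nonzero if some coordinate is positive. -/
def nonzeroBundle {k : ℕ} (d : Bundle k) : Prop := ∃ i, 0 < d i

/-- A valid bid requests a nonzero bundle and declares a nonnegative valuation. -/
def validBid {k : ℕ} (b : Bid k) : Prop := nonzeroBundle b.1 ∧ 0 ≤ b.2

/-- The weighted bundle size `d̂(d) = Σ_i (d i)·(f i)`. -/
def dhat {k : ℕ} (f : Fin k → ℝ) (d : Bundle k) : ℝ := ∑ i, (d i : ℝ) * f i

/-- The bundle reserve price `ô(d) = Σ_i (d i)·(o i)`. -/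
def ohat {k : ℕ} (o : Fin k → ℝ) (d : Bundle k) : ℝ := ∑ i, (d i : ℝ) * o i

/-- The bid density `e(d, v) = v / (d̂ d)^q`. -/
def density {k : ℕ} (f : Fin k → ℝ) (q : ℝ) (b : Bid k) : ℝ := b.2 / (dhat f b.1) ^ q

/-- The indices of the active set `A`, sorted in non-increasing order of bid density;
`mergeSort` is stable and `A.sort (· ≤ ·)` lists indices increasingly, so ties are
broken by smaller index first. -/
def sortedBids {k n : ℕ} (f : Fin k → ℝ) (q : ℝ) (B : Fin n → Bid k) (A : Finset (Fin n)) :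
    List (Fin n) :=
  (A.sort (· ≤ ·)).mergeSort (fun i j => decide (density f q (B j) ≤ density f q (B i)))

/-- Greedy-RP allocation scheme (GRP-A) run on the active index set `A`: process the
indices in non-increasing density order and grant an index whenever both the available
resource constraint (ARC) and the reserve price constraint (RPC) hold. -/
def grants {k n : ℕ} (o f : Fin k → ℝ) (s : Fin k → ℕ) (q : ℝ) (B : Fin n → Bid k)
    (A : Finset (Fin n)) : Finset (Fin n) :=
  (sortedBids f q B A).foldl
    (fun W j =>
      if (∀ i, (B j).1 i + ∑ j' ∈ W, (B j').1 i ≤ s i) ∧ ohat o (B j).1 ≤ (B j).2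
      then insert j W else W) ∅

/-- `W(B)`: the winners of GRP-A run on all bids. -/
def winners {k n : ℕ} (o f : Fin k → ℝ) (s : Fin k → ℕ) (q : ℝ) (B : Fin n → Bid k) :
    Finset (Fin n) :=
  grants o f s q B Finset.univ

/-- `W'_j = W(B_{-j}) \ W(B)`: the new winners once bid `j` is removed. -/
def competitorSet {k n : ℕ} (o f : Fin k → ℝ) (s : Fin k → ℕ) (q : ℝ) (B : Fin n → Bid k)
    (j : Fin n) : Finset (Fin n) :=
  grants o f s q B (Finset.univ.erase j) \ winners o f s q B

/-- The competitor density `e_j^comp`: the maximum density over `W'_j`, or `0` if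
`W'_j` is empty. -/
def ecomp {k n : ℕ} (o f : Fin k → ℝ) (s : Fin k → ℕ) (q : ℝ) (B : Fin n → Bid k)
    (j : Fin n) : ℝ :=
  if h : (competitorSet o f s q B j).Nonempty
  then (competitorSet o f s q B j).sup' h (fun i => density f q (B i))
  else 0

/-- The bid-specific reserve density `e_res(b) = ô(d)/(d̂ d)^q`. -/
def eres {k : ℕ} (o f : Fin k → ℝ) (q : ℝ) (b : Bid k) : ℝ := ohat o b.1 / (dhat f b.1) ^ q

/-- Greedy-RP pricing scheme (GRP-P): a winner `j` pays
`p_j = max(e_j^comp, e_res(b_j)) · (d̂ d_j)^q`; a non-winner pays `0`. -/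
def payment {k n : ℕ} (o f : Fin k → ℝ) (s : Fin k → ℕ) (q : ℝ) (B : Fin n → Bid k)
    (j : Fin n) : ℝ :=
  if j ∈ winners o f s q B
  then max (ecomp o f s q B j) (eres o f q (B j)) * (dhat f (B j).1) ^ q
  else 0


namespace SPSAux

open List in
theorem _dummy : True := trivial

open List

variable {α : Type*}

/-- First occurrence index of an element of a prefix is below the prefix length. -/
lemma indexOf_lt_of_mem_take [DecidableEq α] :
    ∀ {l : List α} {m : ℕ} {x : α}, x ∈ l.take m → l.idxOf x < m := by
  intro l
  induction l with
  | nil => intro m x h; simp at h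
  | cons a t ih =>
    intro m x h
    cases m with
    | zero => simp at h
    | succ m =>
      simp only [List.take_succ_cons, List.mem_cons] at h
      rcases eq_or_ne x a with rfl | hne
      · simp [List.idxOf_cons_self]
      · have hx : x ∈ t.take m := by
          rcases h with h | h
          · exact absurd h hne
          · exact h
        rw [List.idxOf_cons_ne _ (Ne.symm hne)]
        exact Nat.succ_lt_succ (ih hx)

lemma pair_sublist_or {a b : α} :
    ∀ {l : List α}, a ∈ l → b ∈ l → a ≠ b → [a, b] <+ l ∨ [b, a] <+ l := by
  intro l
  induction l with
  | nil => intro h; simp at h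
  | cons x t ih =>
    intro ha hb hne
    rcases List.mem_cons.mp ha with rfl | ha'
    · have hb' : b ∈ t := by
        rcases List.mem_cons.mp hb with rfl | hb'
        · exact absurd rfl hne
        · exact hb'
      exact Or.inl (List.Sublist.cons_cons a (List.singleton_sublist.mpr hb'))
    · rcases List.mem_cons.mp hb with rfl | hb'
      · exact Or.inr (List.Sublist.cons_cons b (List.singleton_sublist.mpr ha'))
      · exact (ih ha' hb' hne).imp (List.Sublist.cons x) (List.Sublist.cons x)

lemma eq_of_pair_sublists {a b : α} :
    ∀ {l : List α}, l.Nodup → [a, b] <+ l → [b, a] <+ l → a = b := by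
  intro l
  induction l with
  | nil => intro _ h; cases h
  | cons x t ih =>
    intro hnd h1 h2
    rw [List.nodup_cons] at hnd
    cases h1 with
    | cons _ h1' =>
      cases h2 with
      | cons _ h2' => exact ih hnd.2 h1' h2'
      | cons_cons _ h2' =>
        -- x = b, [a,b] <+ t gives b ∈ t, contra
        exact absurd (h1'.subset (by simp)) hnd.1
    | cons_cons _ h1' =>
      cases h2 with
      | cons _ h2' =>
        exact absurd (h2'.subset (by simp)) hnd.1
      | cons_cons _ h2' => rfl

lemma indexOf_lt_of_pair_sublist [DecidableEq α] {a b : α} :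
    ∀ {l : List α}, l.Nodup → [a, b] <+ l → l.idxOf a < l.idxOf b := by
  intro l
  induction l with
  | nil => intro _ h; cases h
  | cons x t ih =>
    intro hnd h
    rw [List.nodup_cons] at hnd
    cases h with
    | cons _ h' =>
      have ha : a ∈ t := h'.subset (by simp)
      have hb : b ∈ t := h'.subset (by simp)
      have hxa : x ≠ a := fun e => hnd.1 (e ▸ ha)
      have hxb : x ≠ b := fun e => hnd.1 (e ▸ hb)
      rw [List.idxOf_cons_ne _ hxa, List.idxOf_cons_ne _ hxb]
      exact Nat.succ_lt_succ (ih hnd.2 h')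
    | cons_cons _ h' =>
      have hb : b ∈ t := h'.subset (by simp)
      have hxb : a ≠ b := fun e => hnd.1 (e ▸ hb)
      rw [List.idxOf_cons_self, List.idxOf_cons_ne _ hxb]
      exact Nat.succ_pos _

lemma append_cons_inj {i : α} :
    ∀ {p₁ p₂ r₁ r₂ : List α}, p₁ ++ i :: r₁ = p₂ ++ i :: r₂ → i ∉ p₁ → i ∉ p₂ → p₁ = p₂ := by
  intro p₁
  induction p₁ with
  | nil =>
    intro p₂ r₁ r₂ h h1 h2
    cases p₂ with
    | nil => rfl
    | cons x p₂' =>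
      simp only [List.nil_append, List.cons_append, List.cons.injEq] at h
      exact absurd (h.1 ▸ List.mem_cons_self) h2
  | cons a p₁' ih =>
    intro p₂ r₁ r₂ h h1 h2
    cases p₂ with
    | nil =>
      simp only [List.cons_append, List.nil_append, List.cons.injEq] at h
      exact absurd (h.1 ▸ List.mem_cons_self) h1
    | cons x p₂' =>
      simp only [List.cons_append, List.cons.injEq] at h
      have := ih h.2 (fun hm => h1 (List.mem_cons_of_mem a hm)) (fun hm => h2 (List.mem_cons_of_mem x hm))
      rw [h.1, this]

/-- Strict precedence by non-increasing `g`-value, ties broken by the order on `α`. -/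
def Pg [LT α] (g : α → ℝ) (a b : α) : Prop := g b < g a ∨ (g a = g b ∧ a < b)

lemma Pg_asymm [Preorder α] {g : α → ℝ} {a b : α} (h1 : Pg g a b) (h2 : Pg g b a) : False := by
  rcases h1 with h1 | ⟨e1, h1⟩ <;> rcases h2 with h2 | ⟨e2, h2⟩
  · exact lt_asymm h1 h2
  · exact absurd e2.symm (ne_of_gt h1)
  · exact absurd e1 (ne_of_lt h2)
  · exact lt_asymm h1 h2

lemma Pg_total [LinearOrder α] {g : α → ℝ} {a b : α} (hne : a ≠ b) : Pg g a b ∨ Pg g b a := by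
  rcases lt_trichotomy (g a) (g b) with h | h | h
  · exact Or.inr (Or.inl h)
  · rcases hne.lt_or_gt with h' | h'
    · exact Or.inl (Or.inr ⟨h, h'⟩)
    · exact Or.inr (Or.inr ⟨h.symm, h'⟩)
  · exact Or.inl (Or.inl h)

lemma pairwise_Pg_mergeSort [LinearOrder α] (g : α → ℝ) {L : List α}
    (hL : L.Pairwise (· < ·)) :
    (L.mergeSort (fun a b => decide (g b ≤ g a))).Pairwise (Pg g) := by
  have trans : ∀ a b c : α, decide (g b ≤ g a) = true → decide (g c ≤ g b) = true →
      decide (g c ≤ g a) = true := by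
    intro a b c h1 h2
    simp only [decide_eq_true_eq] at *
    exact le_trans h2 h1
  have total : ∀ a b : α, (decide (g b ≤ g a) || decide (g a ≤ g b)) = true := by
    intro a b
    simpa using le_total (g b) (g a)
  have hnd : L.Nodup := hL.imp ne_of_lt
  have hndM : (L.mergeSort (fun a b => decide (g b ≤ g a))).Nodup :=
    ((List.mergeSort_perm L _).nodup_iff).mpr hnd
  have hPr := List.pairwise_mergeSort trans total L
  rw [List.pairwise_iff_forall_sublist]
  intro a b hab
  have hr : g b ≤ g a := by
    have := List.pairwise_iff_forall_sublist.mp hPr hab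
    simpa using this
  have hne : a ≠ b := by
    have := hab.nodup hndM
    simp [List.nodup_cons] at this
    exact this
  rcases lt_or_eq_of_le hr with h | h
  · exact Or.inl h
  · refine Or.inr ⟨h.symm, ?_⟩
    by_contra hba
    have hba' : b < a := (not_lt.mp hba).lt_of_ne (Ne.symm hne)
    have haL : a ∈ L := List.mem_mergeSort.mp (hab.subset (by simp))
    have hbL : b ∈ L := List.mem_mergeSort.mp (hab.subset (by simp))
    have hsub : [b, a] <+ L := by
      rcases pair_sublist_or hbL haL (Ne.symm hne) with h' | h'
      · exact h'
      · exact absurd (List.pairwise_iff_forall_sublist.mp hL h') (not_lt.mpr hba'.le)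
    have hsubM : [b, a] <+ L.mergeSort (fun a b => decide (g b ≤ g a)) :=
      List.pair_sublist_mergeSort trans total (by simp [h]) hsub
    exact hne (eq_of_pair_sublists hndM hab hsubM)

lemma indexOf_lt_iff [LinearOrder α] [DecidableEq α] {g : α → ℝ} {M : List α}
    (hM : M.Pairwise (Pg g)) (hnd : M.Nodup) {a b : α} (ha : a ∈ M) (hb : b ∈ M)
    (hne : a ≠ b) : M.idxOf a < M.idxOf b ↔ Pg g a b := by
  have key : ∀ x y : α, x ∈ M → y ∈ M → x ≠ y → Pg g x y → M.idxOf x < M.idxOf y := by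
    intro x y hx hy hxy hP
    rcases pair_sublist_or hx hy hxy with h | h
    · exact indexOf_lt_of_pair_sublist hnd h
    · exact absurd (List.pairwise_iff_forall_sublist.mp hM h) (fun h' => (Pg_asymm hP h').elim)
  constructor
  · intro hlt
    rcases Pg_total (g := g) hne with h | h
    · exact h
    · exact absurd (key b a hb ha (Ne.symm hne) h) (by omega)
  · exact key a b ha hb hne

lemma subset_foldl [DecidableEq α] {fstep : Finset α → α → Finset α}
    (hstep : ∀ W a, fstep W a = insert a W ∨ fstep W a = W) :
    ∀ (l : List α) (W : Finset α), W ⊆ l.foldl fstep W := by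
  intro l
  induction l with
  | nil => intro W; exact subset_rfl
  | cons a t ih =>
    intro W
    refine subset_trans ?_ (ih (fstep W a))
    rcases hstep W a with h | h
    · rw [h]; exact Finset.subset_insert a W
    · rw [h]

lemma mem_foldl [DecidableEq α] {fstep : Finset α → α → Finset α}
    (hstep : ∀ W a, fstep W a = insert a W ∨ fstep W a = W) :
    ∀ (l : List α) (W : Finset α) (x : α), x ∈ l.foldl fstep W → x ∈ W ∨ x ∈ l := by
  intro l
  induction l with
  | nil => intro W x h; exact Or.inl h
  | cons a t ih =>
    intro W x h
    rcases ih (fstep W a) x h with h' | h'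
    · rcases hstep W a with he | he <;> rw [he] at h'
      · rcases Finset.mem_insert.mp h' with rfl | h''
        · exact Or.inr (List.mem_cons_self)
        · exact Or.inl h''
      · exact Or.inl h'
    · exact Or.inr (List.mem_cons_of_mem a h')

end SPSAux


namespace SPSAux

/-- The step function of the GRP-A fold. -/
def gstep {k n : ℕ} (o : Fin k → ℝ) (s : Fin k → ℕ) (B : Fin n → Bid k)
    (W : Finset (Fin n)) (j : Fin n) : Finset (Fin n) :=
  if (∀ i, (B j).1 i + ∑ j' ∈ W, (B j').1 i ≤ s i) ∧ ohat o (B j).1 ≤ (B j).2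
  then insert j W else W

lemma grants_eq {k n : ℕ} (o f : Fin k → ℝ) (s : Fin k → ℕ) (q : ℝ) (B : Fin n → Bid k)
    (A : Finset (Fin n)) :
    grants o f s q B A = (sortedBids f q B A).foldl (gstep o s B) ∅ := rfl

lemma gstep_cases {k n : ℕ} (o : Fin k → ℝ) (s : Fin k → ℕ) (B : Fin n → Bid k) :
    ∀ (W : Finset (Fin n)) (a : Fin n),
      gstep o s B W a = insert a W ∨ gstep o s B W a = W := by
  intro W a
  unfold gstep
  split
  · exact Or.inl rfl
  · exact Or.inr rfl

lemma gstep_congr {k n : ℕ} (o : Fin k → ℝ) (s : Fin k → ℕ) (B B' : Fin n → Bid k)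
    (W : Finset (Fin n)) (a : Fin n) (hBa : B a = B' a) (hW : ∀ x ∈ W, B x = B' x) :
    gstep o s B W a = gstep o s B' W a := by
  have hsum : ∀ r, (∑ x ∈ W, (B x).1 r) = ∑ x ∈ W, (B' x).1 r := fun r =>
    Finset.sum_congr rfl (fun x hx => by rw [hW x hx])
  unfold gstep
  refine if_congr ?_ rfl rfl
  rw [hBa]
  simp only [hsum]

lemma gstep_foldl_congr {k n : ℕ} (o : Fin k → ℝ) (s : Fin k → ℕ) (B B' : Fin n → Bid k) :
    ∀ (p : List (Fin n)) (W : Finset (Fin n)), (∀ x ∈ p, B x = B' x) → (∀ x ∈ W, B x = B' x) →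
      p.foldl (gstep o s B) W = p.foldl (gstep o s B') W := by
  intro p
  induction p with
  | nil => intro W _ _; rfl
  | cons a t ih =>
    intro W hp hW
    have hBa : B a = B' a := hp a (List.mem_cons_self)
    have hstepeq : gstep o s B W a = gstep o s B' W a := gstep_congr o s B B' W a hBa hW
    have hW' : ∀ x ∈ gstep o s B W a, B x = B' x := by
      intro x hx
      rcases gstep_cases o s B W a with h | h <;> rw [h] at hx
      · rcases Finset.mem_insert.mp hx with rfl | hx'
        · exact hBa
        · exact hW x hx'
      · exact hW x hx
    simp only [List.foldl_cons]
    rw [← hstepeq]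
    exact ih _ (fun x hx => hp x (List.mem_cons_of_mem a hx)) hW'

lemma mem_grants_iff {k n : ℕ} (o f : Fin k → ℝ) (s : Fin k → ℕ) (q : ℝ) (B : Fin n → Bid k)
    (A : Finset (Fin n)) {i : Fin n} {p t : List (Fin n)}
    (hdec : sortedBids f q B A = p ++ i :: t) (hip : i ∉ p) (hit : i ∉ t) :
    (i ∈ grants o f s q B A ↔
      ((∀ r, (B i).1 r + ∑ j' ∈ p.foldl (gstep o s B) ∅, (B j').1 r ≤ s r) ∧
        ohat o (B i).1 ≤ (B i).2)) := by
  rw [grants_eq, hdec, List.foldl_append, List.foldl_cons]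
  set W₁ := p.foldl (gstep o s B) ∅ with hW₁
  by_cases hc : (∀ r, (B i).1 r + ∑ j' ∈ W₁, (B j').1 r ≤ s r) ∧ ohat o (B i).1 ≤ (B i).2
  · have : gstep o s B W₁ i = insert i W₁ := by unfold gstep; rw [if_pos hc]
    rw [this]
    exact iff_of_true (subset_foldl (gstep_cases o s B) t _ (Finset.mem_insert_self i W₁)) hc
  · have : gstep o s B W₁ i = W₁ := by unfold gstep; rw [if_neg hc]
    rw [this]
    refine iff_of_false (fun hmem => ?_) hc
    rcases mem_foldl (gstep_cases o s B) t W₁ i hmem with h | h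
    · rcases mem_foldl (gstep_cases o s B) p ∅ i h with h' | h'
      · exact absurd h' (Finset.notMem_empty i)
      · exact hip h'
    · exact hit h

end SPSAux


open List

/-- sorted-prefix stability under lowering one bid's density. If `B'`
is obtained from `B` by replacing only bid `j` by a bid of no greater density, then
(a) every index `i ≠ j` preceding `j` in the density-sorted order of `B` also
precedes `j` in the density-sorted order of `B'`; (b) the relative order of the
indices other than `j` is the same in both sorted lists; and (c) every index
`i ≠ j` preceding `j` in the sorted order of `B` receives the same grant decision
under GRP-A applied to `B` as under GRP-A applied to `B'`. -/
theorem sorted_prefix_stable {k n : ℕ} (hk : 1 ≤ k)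
    (f o : Fin k → ℝ) (hf : ∀ i, 0 < f i) (ho : ∀ i, 0 ≤ o i)
    (s : Fin k → ℕ) (q : ℝ) (hq : 0 < q)
    (B B' : Fin n → Bid k) (j : Fin n)
    (hB : ∀ i, validBid (B i)) (hB' : validBid (B' j))
    (hsame : ∀ i, i ≠ j → B' i = B i)
    (hdens : density f q (B' j) ≤ density f q (B j)) :
    (∀ i, i ≠ j →
        (sortedBids f q B Finset.univ).idxOf i < (sortedBids f q B Finset.univ).idxOf j →
        (sortedBids f q B' Finset.univ).idxOf i < (sortedBids f q B' Finset.univ).idxOf j) ∧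
    ((sortedBids f q B Finset.univ).filter (fun i => i ≠ j)
      = (sortedBids f q B' Finset.univ).filter (fun i => i ≠ j)) ∧
    (∀ i, i ≠ j →
        (sortedBids f q B Finset.univ).idxOf i < (sortedBids f q B Finset.univ).idxOf j →
        (i ∈ grants o f s q B Finset.univ ↔ i ∈ grants o f s q B' Finset.univ)) := by
  classical
  have hgsame : ∀ x : Fin n, x ≠ j → density f q (B' x) = density f q (B x) := fun x hx => by
    rw [hsame x hx]
  have hL : (Finset.univ.sort (· ≤ ·) : List (Fin n)).Pairwise (· < ·) :=
    (Finset.sortedLT_sort _).pairwise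
  have hLnd : (Finset.univ.sort (· ≤ ·) : List (Fin n)).Nodup := Finset.sort_nodup _ _
  have hp1 : (sortedBids f q B Finset.univ).Pairwise (SPSAux.Pg fun i => density f q (B i)) :=
    SPSAux.pairwise_Pg_mergeSort _ hL
  have hp2 : (sortedBids f q B' Finset.univ).Pairwise (SPSAux.Pg fun i => density f q (B' i)) :=
    SPSAux.pairwise_Pg_mergeSort _ hL
  have hperm1 : sortedBids f q B Finset.univ ~ Finset.univ.sort (· ≤ ·) :=
    List.mergeSort_perm _ _
  have hperm2 : sortedBids f q B' Finset.univ ~ Finset.univ.sort (· ≤ ·) :=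
    List.mergeSort_perm _ _
  have hnd1 : (sortedBids f q B Finset.univ).Nodup := hperm1.nodup_iff.mpr hLnd
  have hnd2 : (sortedBids f q B' Finset.univ).Nodup := hperm2.nodup_iff.mpr hLnd
  have hmem1 : ∀ x : Fin n, x ∈ sortedBids f q B Finset.univ := fun x => by
    unfold sortedBids
    rw [List.mem_mergeSort]
    simp
  have hmem2 : ∀ x : Fin n, x ∈ sortedBids f q B' Finset.univ := fun x => by
    unfold sortedBids
    rw [List.mem_mergeSort]
    simp
  have hPtransfer : ∀ x : Fin n, x ≠ j →
      SPSAux.Pg (fun i => density f q (B i)) x j →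
      SPSAux.Pg (fun i => density f q (B' i)) x j := by
    intro x hx hP
    have hgx : density f q (B' x) = density f q (B x) := hgsame x hx
    rcases hP with h | ⟨he, hlt'⟩
    · exact Or.inl (by simpa [hgx] using lt_of_le_of_lt hdens h)
    · have h1 : density f q (B' j) ≤ density f q (B' x) := by
        simp only [hgx]
        exact hdens.trans he.symm.le
      rcases h1.lt_or_eq with h2 | h2
      · exact Or.inl h2
      · exact Or.inr ⟨h2.symm, hlt'⟩
  have partA : ∀ i, i ≠ j →
      (sortedBids f q B Finset.univ).idxOf i < (sortedBids f q B Finset.univ).idxOf j →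
      (sortedBids f q B' Finset.univ).idxOf i < (sortedBids f q B' Finset.univ).idxOf j := by
    intro i hij hlt
    have hP : SPSAux.Pg (fun i => density f q (B i)) i j :=
      (SPSAux.indexOf_lt_iff hp1 hnd1 (hmem1 i) (hmem1 j) hij).mp hlt
    exact (SPSAux.indexOf_lt_iff hp2 hnd2 (hmem2 i) (hmem2 j) hij).mpr (hPtransfer i hij hP)
  have hperm : sortedBids f q B Finset.univ ~ sortedBids f q B' Finset.univ :=
    hperm1.trans hperm2.symm
  have partB : (sortedBids f q B Finset.univ).filter (fun i => i ≠ j)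
      = (sortedBids f q B' Finset.univ).filter (fun i => i ≠ j) := by
    haveI : Std.Antisymm (SPSAux.Pg fun i => density f q (B' i)) :=
      ⟨fun a b h1 h2 => (SPSAux.Pg_asymm h1 h2).elim⟩
    refine List.Perm.eq_of_pairwise' (r := SPSAux.Pg fun i => density f q (B' i)) ?_ ?_ (hperm.filter _)
    · have hpf : ((sortedBids f q B Finset.univ).filter (fun i => i ≠ j)).Pairwise
          (SPSAux.Pg fun i => density f q (B i)) :=
        hp1.sublist List.filter_sublist
      refine List.Pairwise.imp_of_mem ?_ hpf
      intro a b ha hb hab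
      have haj : a ≠ j := by simpa using List.of_mem_filter ha
      have hbj : b ≠ j := by simpa using List.of_mem_filter hb
      simpa [SPSAux.Pg, hgsame a haj, hgsame b hbj] using hab
    · exact hp2.sublist List.filter_sublist
  refine ⟨partA, partB, ?_⟩
  intro i hij hlt
  have hlt' : (sortedBids f q B' Finset.univ).idxOf i < (sortedBids f q B' Finset.univ).idxOf j :=
    partA i hij hlt
  have hd₁ : (sortedBids f q B Finset.univ).idxOf i < (sortedBids f q B Finset.univ).length :=
    List.idxOf_lt_length_iff.mpr (hmem1 i)
  have hd₂ : (sortedBids f q B' Finset.univ).idxOf i < (sortedBids f q B' Finset.univ).length :=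
    List.idxOf_lt_length_iff.mpr (hmem2 i)
  have hdec₁ : sortedBids f q B Finset.univ =
      (sortedBids f q B Finset.univ).take ((sortedBids f q B Finset.univ).idxOf i)
        ++ i :: (sortedBids f q B Finset.univ).drop ((sortedBids f q B Finset.univ).idxOf i + 1) := by
    have h0 := (List.take_append_drop ((sortedBids f q B Finset.univ).idxOf i)
      (sortedBids f q B Finset.univ)).symm
    rwa [List.drop_eq_getElem_cons hd₁, List.getElem_idxOf hd₁] at h0
  have hdec₂ : sortedBids f q B' Finset.univ =
      (sortedBids f q B' Finset.univ).take ((sortedBids f q B' Finset.univ).idxOf i)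
        ++ i :: (sortedBids f q B' Finset.univ).drop ((sortedBids f q B' Finset.univ).idxOf i + 1) := by
    have h0 := (List.take_append_drop ((sortedBids f q B' Finset.univ).idxOf i)
      (sortedBids f q B' Finset.univ)).symm
    rwa [List.drop_eq_getElem_cons hd₂, List.getElem_idxOf hd₂] at h0
  have hip₁ : i ∉ (sortedBids f q B Finset.univ).take ((sortedBids f q B Finset.univ).idxOf i) :=
    fun hmem => lt_irrefl _ (SPSAux.indexOf_lt_of_mem_take hmem)
  have hip₂ : i ∉ (sortedBids f q B' Finset.univ).take ((sortedBids f q B' Finset.univ).idxOf i) :=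
    fun hmem => lt_irrefl _ (SPSAux.indexOf_lt_of_mem_take hmem)
  have hpj₁ : ∀ x ∈ (sortedBids f q B Finset.univ).take ((sortedBids f q B Finset.univ).idxOf i),
      x ≠ j := by
    intro x hx hxj
    have h1 : (sortedBids f q B Finset.univ).idxOf x < (sortedBids f q B Finset.univ).idxOf i :=
      SPSAux.indexOf_lt_of_mem_take hx
    rw [hxj] at h1
    omega
  have hpj₂ : ∀ x ∈ (sortedBids f q B' Finset.univ).take ((sortedBids f q B' Finset.univ).idxOf i),
      x ≠ j := by
    intro x hx hxj
    have h1 : (sortedBids f q B' Finset.univ).idxOf x < (sortedBids f q B' Finset.univ).idxOf i :=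
      SPSAux.indexOf_lt_of_mem_take hx
    rw [hxj] at h1
    omega
  have hf₁ : (sortedBids f q B Finset.univ).filter (fun x => x ≠ j) =
      (sortedBids f q B Finset.univ).take ((sortedBids f q B Finset.univ).idxOf i)
        ++ i :: ((sortedBids f q B Finset.univ).drop ((sortedBids f q B Finset.univ).idxOf i + 1)).filter (fun x => x ≠ j) := by
    conv_lhs => rw [hdec₁]
    rw [List.filter_append, List.filter_cons_of_pos (by simpa using hij),
      List.filter_eq_self.mpr (fun a ha => by simpa using hpj₁ a ha)]
  have hf₂ : (sortedBids f q B' Finset.univ).filter (fun x => x ≠ j) =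
      (sortedBids f q B' Finset.univ).take ((sortedBids f q B' Finset.univ).idxOf i)
        ++ i :: ((sortedBids f q B' Finset.univ).drop ((sortedBids f q B' Finset.univ).idxOf i + 1)).filter (fun x => x ≠ j) := by
    conv_lhs => rw [hdec₂]
    rw [List.filter_append, List.filter_cons_of_pos (by simpa using hij),
      List.filter_eq_self.mpr (fun a ha => by simpa using hpj₂ a ha)]
  have hpre : (sortedBids f q B Finset.univ).take ((sortedBids f q B Finset.univ).idxOf i)
      = (sortedBids f q B' Finset.univ).take ((sortedBids f q B' Finset.univ).idxOf i) :=
    SPSAux.append_cons_inj (by rw [← hf₁, ← hf₂]; exact partB) hip₁ hip₂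
  have hit₁ : i ∉ (sortedBids f q B Finset.univ).drop ((sortedBids f q B Finset.univ).idxOf i + 1) := by
    have h := hnd1
    rw [hdec₁] at h
    exact (List.nodup_cons.mp h.of_append_right).1
  have hit₂ : i ∉ (sortedBids f q B' Finset.univ).drop ((sortedBids f q B' Finset.univ).idxOf i + 1) := by
    have h := hnd2
    rw [hdec₂] at h
    exact (List.nodup_cons.mp h.of_append_right).1
  have hg₁ := SPSAux.mem_grants_iff o f s q B Finset.univ hdec₁ hip₁ hit₁
  have hg₂ := SPSAux.mem_grants_iff o f s q B' Finset.univ hdec₂ hip₂ hit₂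
  rw [← hpre] at hg₂
  have hBp : ∀ x ∈ (sortedBids f q B Finset.univ).take ((sortedBids f q B Finset.univ).idxOf i),
      B x = B' x := fun x hx => (hsame x (hpj₁ x hx)).symm
  have hWeq : ((sortedBids f q B Finset.univ).take ((sortedBids f q B Finset.univ).idxOf i)).foldl
        (SPSAux.gstep o s B) ∅
      = ((sortedBids f q B Finset.univ).take ((sortedBids f q B Finset.univ).idxOf i)).foldl
        (SPSAux.gstep o s B') ∅ :=
    SPSAux.gstep_foldl_congr o s B B' _ ∅ hBp (by simp)
  rw [hg₁, hg₂, ← hWeq]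
  have hWj : ∀ x ∈ ((sortedBids f q B Finset.univ).take ((sortedBids f q B Finset.univ).idxOf i)).foldl
      (SPSAux.gstep o s B) ∅, x ≠ j := by
    intro x hx
    rcases SPSAux.mem_foldl (SPSAux.gstep_cases o s B) _ _ _ hx with h | h
    · exact absurd h (Finset.notMem_empty x)
    · exact hpj₁ x h
  have hsum : ∀ r, (∑ x ∈ ((sortedBids f q B Finset.univ).take ((sortedBids f q B Finset.univ).idxOf i)).foldl
        (SPSAux.gstep o s B) ∅, (B' x).1 r)
      = ∑ x ∈ ((sortedBids f q B Finset.univ).take ((sortedBids f q B Finset.univ).idxOf i)).foldl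
        (SPSAux.gstep o s B) ∅, (B x).1 r := fun r =>
    Finset.sum_congr rfl (fun x hx => by rw [hsame x (hWj x hx)])
  rw [hsame i hij]
  simp only [hsum]


end
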